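/- arXiv:2005.01062 — 4 statements merged into one kernel-verified Lean document; each statement's English description precedes it below -/
import Mathlib

section
/- For any positive integer m, the map h from O(m,ℝ) × O(m,ℝ) to GL(2m,ℝ) defined by h(k,l) = (1/2) * [[k + JlJ, kJ - Jl],[Jk - lJ, JkJ + l]], where J is the m×m anti-diagonal matrix of 1's, is a group homomorphism. -/
open Matrix

/-- The `m × m` anti-diagonal matrix of `1`'s. -/
noncomputable def Jmat (m : ℕ) : Matrix (Fin m) (Fin m) ℝ :=
  fun i j => if (i : ℕ) + (j : ℕ) = m - 1 then 1 else 0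

/-- The map `h(k,l) = (1/2)[[k + JlJ, kJ - Jl],[Jk - lJ, JkJ + l]]` in block form. -/
noncomputable def hMap (m : ℕ) (k l : Matrix (Fin m) (Fin m) ℝ) :
    Matrix (Fin m ⊕ Fin m) (Fin m ⊕ Fin m) ℝ :=
  (1/2 : ℝ) • Matrix.fromBlocks
    (k + Jmat m * l * Jmat m) (k * Jmat m - Jmat m * l)
    (Jmat m * k - l * Jmat m) (Jmat m * k * Jmat m + l)

lemma Jmat_sq (m : ℕ) : Jmat m * Jmat m = 1 := by
  ext i p
  have hi : (i : ℕ) ≤ m - 1 := Nat.le_sub_one_of_lt i.isLt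
  have hp : (p : ℕ) ≤ m - 1 := Nat.le_sub_one_of_lt p.isLt
  have hlt : m - 1 - (i : ℕ) < m := by omega
  rw [Matrix.mul_apply]
  rw [Finset.sum_eq_single (⟨m - 1 - (i : ℕ), hlt⟩ : Fin m)]
  · simp only [Jmat, Matrix.one_apply]
    have h1 : (i : ℕ) + (m - 1 - (i : ℕ)) = m - 1 := by omega
    rw [if_pos h1]
    have h2 : (m - 1 - (i : ℕ)) + (p : ℕ) = m - 1 ↔ i = p :=
      ⟨fun h => Fin.ext (by omega), fun h => by subst h; omega⟩
    simp only [Fin.val_mk, h2, one_mul]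
  · intro b _ hb
    have : (i : ℕ) + (b : ℕ) ≠ m - 1 := by
      intro h
      exact hb (Fin.ext (by simp only [Fin.val_mk]; omega))
    simp [Jmat, this]
  · intro h; exact absurd (Finset.mem_univ _) h

/-- `h` is a group homomorphism on `O(m,ℝ) × O(m,ℝ)`. -/
theorem stmt0 (m : ℕ) (hm : 0 < m)
    (k₁ k₂ l₁ l₂ : Matrix (Fin m) (Fin m) ℝ)
    (hk₁ : k₁ᵀ * k₁ = 1) (hk₂ : k₂ᵀ * k₂ = 1)
    (hl₁ : l₁ᵀ * l₁ = 1) (hl₂ : l₂ᵀ * l₂ = 1) :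
    hMap m (k₁ * k₂) (l₁ * l₂) = hMap m k₁ l₁ * hMap m k₂ l₂ ∧
    hMap m 1 1 = 1 := by
  have hJ := Jmat_sq m
  have hJJ : ∀ A : Matrix (Fin m) (Fin m) ℝ, Jmat m * (Jmat m * A) = A := fun A => by
    rw [← mul_assoc, hJ, one_mul]
  constructor
  · unfold hMap
    rw [Matrix.smul_mul, Matrix.mul_smul, smul_smul, Matrix.fromBlocks_multiply]
    have hB : Matrix.fromBlocks
        ((k₁ + Jmat m * l₁ * Jmat m) * (k₂ + Jmat m * l₂ * Jmat m) +
          (k₁ * Jmat m - Jmat m * l₁) * (Jmat m * k₂ - l₂ * Jmat m))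
        ((k₁ + Jmat m * l₁ * Jmat m) * (k₂ * Jmat m - Jmat m * l₂) +
          (k₁ * Jmat m - Jmat m * l₁) * (Jmat m * k₂ * Jmat m + l₂))
        ((Jmat m * k₁ - l₁ * Jmat m) * (k₂ + Jmat m * l₂ * Jmat m) +
          (Jmat m * k₁ * Jmat m + l₁) * (Jmat m * k₂ - l₂ * Jmat m))
        ((Jmat m * k₁ - l₁ * Jmat m) * (k₂ * Jmat m - Jmat m * l₂) +
          (Jmat m * k₁ * Jmat m + l₁) * (Jmat m * k₂ * Jmat m + l₂)) =
        (2:ℝ) • Matrix.fromBlocks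
          (k₁ * k₂ + Jmat m * (l₁ * l₂) * Jmat m) (k₁ * k₂ * Jmat m - Jmat m * (l₁ * l₂))
          (Jmat m * (k₁ * k₂) - l₁ * l₂ * Jmat m) (Jmat m * (k₁ * k₂) * Jmat m + l₁ * l₂) := by
      rw [Matrix.fromBlocks_smul]
      congr 1 <;>
      · simp only [add_mul, mul_add, sub_mul, mul_sub, mul_assoc, hJJ, two_smul, smul_add,
          smul_sub]
        abel
    rw [hB, smul_smul]
    norm_num
  · unfold hMap
    simp only [mul_one, one_mul]
    rw [hJ, sub_self]
    rw [Matrix.fromBlocks_smul, smul_zero]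
    rw [show ((1:ℝ)/2) • ((1:Matrix (Fin m) (Fin m) ℝ) + 1) = 1 by
      rw [smul_add, ← add_smul]; norm_num]
    exact Matrix.fromBlocks_one
end

section
/- For any positive integer m, if k, l ∈ O(m,ℝ) then the matrix h(k,l) = (1/2) * [[k + JlJ, kJ - Jl],[Jk - lJ, JkJ + l]] satisfies h(k,l)ᵀ · J_{2m} · h(k,l) = J_{2m}, i.e., h(k,l) lies in the split orthogonal group O(m,m)(ℝ) defined by the anti-diagonal form. -/
open Matrix

/-- The `2m × 2m` anti-diagonal matrix of `1`'s, in block form `[[0, J],[J, 0]]`. -/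
noncomputable def Jbig (m : ℕ) : Matrix (Fin m ⊕ Fin m) (Fin m ⊕ Fin m) ℝ :=
  Matrix.fromBlocks 0 (Jmat m) (Jmat m) 0

lemma Jmat_transpose (m : ℕ) : (Jmat m)ᵀ = Jmat m := by
  ext i j
  simp [Jmat, Matrix.transpose_apply, Nat.add_comm]

/-- `h(k,l)` lies in the split orthogonal group `O(m,m)(ℝ)`:
`h(k,l)ᵀ ⬝ J_{2m} ⬝ h(k,l) = J_{2m}`. -/
theorem stmt1 (m : ℕ) (hm : 0 < m)
    (k l : Matrix (Fin m) (Fin m) ℝ)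
    (hk : kᵀ * k = 1) (hl : lᵀ * l = 1) :
    (hMap m k l)ᵀ * Jbig m * hMap m k l = Jbig m := by
  set J := Jmat m with hJ
  have hJT : Jᵀ = J := Jmat_transpose m
  have hJ2 : J * J = 1 := Jmat_sq m
  set T : Matrix (Fin m ⊕ Fin m) (Fin m ⊕ Fin m) ℝ := fromBlocks 1 J J (-1) with hTdef
  set D : Matrix (Fin m ⊕ Fin m) (Fin m ⊕ Fin m) ℝ := fromBlocks k 0 0 l with hDdef
  set K : Matrix (Fin m ⊕ Fin m) (Fin m ⊕ Fin m) ℝ := fromBlocks 1 0 0 (-1) with hKdef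
  have hT : hMap m k l = (1/2 : ℝ) • (T * D * T) := by
    rw [hMap, hTdef, hDdef, Matrix.fromBlocks_multiply, Matrix.fromBlocks_multiply]
    simp [sub_eq_add_neg, mul_assoc, ← hJ]
  have hTt : Tᵀ = T := by
    rw [hTdef, Matrix.fromBlocks_transpose, hJT]
    simp
  have e1 : T * Jbig m * T = (2 : ℝ) • K := by
    rw [hTdef, Jbig, hKdef, Matrix.fromBlocks_multiply, Matrix.fromBlocks_multiply,
      Matrix.fromBlocks_smul]
    simp [hJ2, two_smul, ← hJ]
  have e2 : Dᵀ * K * D = K := by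
    rw [hDdef, hKdef, Matrix.fromBlocks_transpose, Matrix.fromBlocks_multiply,
      Matrix.fromBlocks_multiply]
    simp [hk, hl]
  have e3 : T * (K * T) = (2 : ℝ) • Jbig m := by
    rw [hTdef, hKdef, Jbig, ← mul_assoc, Matrix.fromBlocks_multiply, Matrix.fromBlocks_multiply,
      Matrix.fromBlocks_smul]
    simp [hJ2, two_smul, ← hJ]
  have f1 : ∀ X, T * (Jbig m * (T * X)) = (2 : ℝ) • (K * X) := by
    intro X
    calc T * (Jbig m * (T * X)) = (T * Jbig m * T) * X := by
          rw [mul_assoc, mul_assoc]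
      _ = (2 : ℝ) • (K * X) := by rw [e1, Matrix.smul_mul]
  have f2 : ∀ X, Dᵀ * (K * (D * X)) = K * X := by
    intro X
    calc Dᵀ * (K * (D * X)) = (Dᵀ * K * D) * X := by rw [mul_assoc, mul_assoc]
      _ = K * X := by rw [e2]
  rw [hT]
  simp only [Matrix.transpose_smul, Matrix.smul_mul, Matrix.mul_smul, smul_smul]
  rw [Matrix.transpose_mul, Matrix.transpose_mul, hTt]
  simp only [mul_assoc]
  rw [f1]
  simp only [Matrix.mul_smul]
  rw [f2, e3]
  simp only [smul_smul]
  norm_num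
end

section
/- Let W^P = {w ∈ W(D_{n+1}) : w⁻¹(α_i) > 0 for 1 ≤ i ≤ n} be the Kostant representatives for the parabolic deleting α₀. Then the elements of W^P of length exactly n are precisely the two elements w⁺: e_i ↦ e_{i+1} (0 ≤ i ≤ n-1), e_n ↦ e₀, and w⁻: e_i ↦ e_{i+1} (0 ≤ i ≤ n-2), e_{n-1} ↦ -e_n, e_n ↦ -e₀. -/
open Finset

/-- The positive roots `{e_i - e_j, e_i + e_j : 0 ≤ i < j ≤ n}` of type `D_{n+1}`. -/
def posRoots (n : ℕ) : Finset (Fin (n+1) → ℚ) :=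
  ((Finset.univ.filter (fun p : Fin (n+1) × Fin (n+1) => p.1 < p.2)).image
      (fun p => (Pi.single p.1 (1:ℚ) - Pi.single p.2 (1:ℚ) : Fin (n+1) → ℚ))) ∪
  ((Finset.univ.filter (fun p : Fin (n+1) × Fin (n+1) => p.1 < p.2)).image
      (fun p => (Pi.single p.1 (1:ℚ) + Pi.single p.2 (1:ℚ) : Fin (n+1) → ℚ)))

/-- The simple roots of type `D_{n+1}`. -/
def sroot (n k : ℕ) : Fin (n+1) → ℚ :=
  if k < n then
    (fun i => if (i : ℕ) = k then 1 else if (i : ℕ) = k + 1 then -1 else 0)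
  else
    (fun i => if (i : ℕ) = n - 1 ∨ (i : ℕ) = n then 1 else 0)

/-- The length (inversion count) of an element acting on `ℚ^{n+1}`. -/
def lenOf (n : ℕ) (f : (Fin (n+1) → ℚ) → (Fin (n+1) → ℚ)) : ℕ :=
  ((posRoots n).filter (fun α => -(f α) ∈ posRoots n)).card

/-- The Weyl group of type `D_{n+1}` as even signed permutations of coordinates. -/
def Wgrp (n : ℕ) : Set ((Fin (n+1) → ℚ) → (Fin (n+1) → ℚ)) :=
  {f | ∃ (σ : Equiv.Perm (Fin (n+1))) (ε : Fin (n+1) → ℚ),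
    (∀ i, ε i = 1 ∨ ε i = -1) ∧ (∏ i, ε i = 1) ∧
    ∀ v i, f v i = ε i * v (σ⁻¹ i)}

/-- Kostant representatives for the parabolic obtained by deleting `α₀`. -/
def WPset (n : ℕ) : Set ((Fin (n+1) → ℚ) → (Fin (n+1) → ℚ)) :=
  {f | f ∈ Wgrp n ∧ ∀ k : ℕ, 1 ≤ k → k ≤ n → ∃ β ∈ posRoots n, f β = sroot n k}

/-- `w⁺`: `e_i ↦ e_{i+1}` for `0 ≤ i ≤ n-1`, `e_n ↦ e₀`, acting on `ℚ^{n+1}`. -/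
def wplusFun (n : ℕ) : (Fin (n+1) → ℚ) → (Fin (n+1) → ℚ) :=
  fun v j => if (j : ℕ) = 0 then v (Fin.last n)
    else v ⟨(j : ℕ) - 1, Nat.lt_of_le_of_lt (Nat.sub_le _ _) j.isLt⟩

/-- `w⁻`: `e_i ↦ e_{i+1}` for `0 ≤ i ≤ n-2`, `e_{n-1} ↦ -e_n`, `e_n ↦ -e₀`. -/
def wminusFun (n : ℕ) : (Fin (n+1) → ℚ) → (Fin (n+1) → ℚ) :=
  fun v j => if (j : ℕ) = 0 then -(v (Fin.last n))
    else if (j : ℕ) = n then -(v ⟨n - 1, Nat.lt_succ_of_le (Nat.sub_le _ _)⟩)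
    else v ⟨(j : ℕ) - 1, Nat.lt_of_le_of_lt (Nat.sub_le _ _) j.isLt⟩

namespace S8
variable {n : ℕ}

def cb (n : ℕ) (a b : Fin (n+1)) (c d : ℚ) : Fin (n+1) → ℚ :=
  fun l => (if l = a then c else 0) + (if l = b then d else 0)

lemma single_sub (a b : Fin (n+1)) :
    (Pi.single a (1:ℚ) - Pi.single b (1:ℚ)) = cb n a b 1 (-1) := by
  funext l; simp only [cb, Pi.sub_apply, Pi.single_apply]; split_ifs <;> norm_num

lemma single_add (a b : Fin (n+1)) :
    (Pi.single a (1:ℚ) + Pi.single b (1:ℚ)) = cb n a b 1 1 := by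
  funext l; simp only [cb, Pi.add_apply, Pi.single_apply]

lemma mem_posRoots {α : Fin (n+1) → ℚ} :
    α ∈ posRoots n ↔ ∃ a b : Fin (n+1), a < b ∧
      (α = cb n a b 1 (-1) ∨ α = cb n a b 1 1) := by
  simp only [posRoots, mem_union, mem_image, mem_filter, mem_univ, true_and,
    single_sub, single_add]
  constructor
  · rintro (⟨p, hp, rfl⟩ | ⟨p, hp, rfl⟩)
    · exact ⟨p.1, p.2, hp, Or.inl rfl⟩
    · exact ⟨p.1, p.2, hp, Or.inr rfl⟩
  · rintro ⟨a, b, hab, (rfl | rfl)⟩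
    · exact Or.inl ⟨(a, b), hab, rfl⟩
    · exact Or.inr ⟨(a, b), hab, rfl⟩

lemma cb_comm (a b : Fin (n+1)) (c d : ℚ) : cb n a b c d = cb n b a d c := by
  funext l; simp [cb, add_comm]

lemma neg_cb (a b : Fin (n+1)) (c d : ℚ) : -(cb n a b c d) = cb n a b (-c) (-d) := by
  funext l; simp only [cb, Pi.neg_apply, neg_add]; split_ifs <;> norm_num

lemma cb_inj {a b a' b' : Fin (n+1)} {c d c' d' : ℚ} (hab : a ≠ b) (hab' : a' ≠ b')
    (hc : c ≠ 0) (hd : d ≠ 0) (hc' : c' ≠ 0) (hd' : d' ≠ 0)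
    (h : cb n a b c d = cb n a' b' c' d') :
    (a' = a ∧ b' = b ∧ c' = c ∧ d' = d) ∨ (a' = b ∧ b' = a ∧ c' = d ∧ d' = c) := by
  have ha' := congrFun h a'
  have hb' := congrFun h b'
  simp only [cb, if_pos rfl, if_neg hab', if_neg (Ne.symm hab'), add_zero, zero_add] at ha' hb'
  -- ha' : (if a' = a then c else 0) + (if a' = b then d else 0) = c'
  -- hb' : (if b' = a then c else 0) + (if b' = b then d else 0) = d'
  by_cases h1 : a' = a
  · subst h1
    rw [if_pos rfl, if_neg hab, add_zero] at ha'
    by_cases h2 : b' = b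
    · subst h2
      rw [if_neg (Ne.symm hab'), if_pos rfl, zero_add] at hb'
      exact Or.inl ⟨rfl, rfl, ha'.symm, hb'.symm⟩
    · rw [if_neg (Ne.symm hab'), if_neg h2, add_zero] at hb'
      exact absurd hb'.symm hd'
  · rw [if_neg h1] at ha'
    by_cases h2 : a' = b
    · subst h2
      rw [if_pos rfl, zero_add] at ha'
      by_cases h3 : b' = a
      · subst h3
        rw [if_pos rfl, if_neg hab, add_zero] at hb'
        exact Or.inr ⟨rfl, rfl, ha'.symm, hb'.symm⟩
      · rw [if_neg h3, if_neg (fun hh => hab' hh.symm), add_zero] at hb'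
        exact absurd hb'.symm hd'
    · rw [if_neg h2, add_zero] at ha'
      exact absurd ha'.symm hc'

lemma pm_ne_zero {c : ℚ} (h : c = 1 ∨ c = -1) : c ≠ 0 := by rcases h with rfl | rfl <;> norm_num

lemma cb_mem_posRoots {a b : Fin (n+1)} {c d : ℚ} (hab : a ≠ b)
    (hc : c = 1 ∨ c = -1) (hd : d = 1 ∨ d = -1) :
    cb n a b c d ∈ posRoots n ↔ (a < b ∧ c = 1) ∨ (b < a ∧ d = 1) := by
  constructor
  · intro h
    rw [mem_posRoots] at h
    obtain ⟨i, j, hij, hor⟩ := h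
    have hne : i ≠ j := ne_of_lt hij
    have := fun (e : ℚ) (he : e ≠ 0) (hh : cb n a b c d = cb n i j 1 e) =>
      cb_inj hab hne (pm_ne_zero hc) (pm_ne_zero hd) one_ne_zero he hh
    rcases hor with hh | hh
    · rcases this (-1) (by norm_num) hh with ⟨h1, h2, h3, h4⟩ | ⟨h1, h2, h3, h4⟩
      · exact Or.inl ⟨by rw [← h1, ← h2]; exact hij, h3.symm⟩
      · exact Or.inr ⟨by rw [← h1, ← h2]; exact hij, h3.symm⟩
    · rcases this 1 one_ne_zero hh with ⟨h1, h2, h3, h4⟩ | ⟨h1, h2, h3, h4⟩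
      · exact Or.inl ⟨by rw [← h1, ← h2]; exact hij, h3.symm⟩
      · exact Or.inr ⟨by rw [← h1, ← h2]; exact hij, h3.symm⟩
  · rintro (⟨hlt, rfl⟩ | ⟨hlt, rfl⟩)
    · rw [mem_posRoots]
      exact ⟨a, b, hlt, by rcases hd with rfl | rfl
                           · exact Or.inr rfl
                           · exact Or.inl rfl⟩
    · rw [mem_posRoots]
      rw [cb_comm]
      exact ⟨b, a, hlt, by rcases hc with rfl | rfl
                           · exact Or.inr rfl
                           · exact Or.inl rfl⟩


-- PART 2
def pairs (n : ℕ) : Finset (Fin (n+1) × Fin (n+1)) := univ.filter (fun p => p.1 < p.2)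

lemma mem_pairs {p : Fin (n+1) × Fin (n+1)} : p ∈ pairs n ↔ p.1 < p.2 := by
  simp [pairs]

lemma f_cb {f : (Fin (n+1) → ℚ) → (Fin (n+1) → ℚ)} {σ : Equiv.Perm (Fin (n+1))}
    {ε : Fin (n+1) → ℚ} (hf : ∀ v i, f v i = ε i * v (σ⁻¹ i)) (a b : Fin (n+1)) (c d : ℚ) :
    f (cb n a b c d) = cb n (σ a) (σ b) (ε (σ a) * c) (ε (σ b) * d) := by
  funext l
  rw [hf]
  simp only [cb]
  rw [mul_add]
  congr 1
  · by_cases h : l = σ a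
    · subst h; rw [if_pos (by simp), if_pos rfl]
    · rw [if_neg (by intro hh; exact h (by rw [← hh]; simp)), if_neg h, mul_zero]
  · by_cases h : l = σ b
    · subst h; rw [if_pos (by simp), if_pos rfl]
    · rw [if_neg (by intro hh; exact h (by rw [← hh]; simp)), if_neg h, mul_zero]

lemma negmem {f : (Fin (n+1) → ℚ) → (Fin (n+1) → ℚ)} {σ : Equiv.Perm (Fin (n+1))}
    {ε : Fin (n+1) → ℚ} (hf : ∀ v i, f v i = ε i * v (σ⁻¹ i))
    (hsgn : ∀ i, ε i = 1 ∨ ε i = -1)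
    {a b : Fin (n+1)} (hab : a ≠ b) {d : ℚ} (hd : d = 1 ∨ d = -1) :
    (-(f (cb n a b 1 d)) ∈ posRoots n) ↔
      (σ a < σ b ∧ ε (σ a) = -1) ∨ (σ b < σ a ∧ ε (σ b) * d = -1) := by
  rw [f_cb hf, neg_cb, cb_mem_posRoots (fun h => hab (σ.injective h))
    (by rcases hsgn (σ a) with h | h <;> rw [h] <;> norm_num)
    (by rcases hsgn (σ b) with h | h <;> rcases hd with rfl | rfl <;> rw [h] <;> norm_num)]
  rw [mul_one]
  constructor
  · rintro (⟨h, h'⟩ | ⟨h, h'⟩)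
    · exact Or.inl ⟨h, by linarith⟩
    · exact Or.inr ⟨h, by linarith⟩
  · rintro (⟨h, h'⟩ | ⟨h, h'⟩)
    · exact Or.inl ⟨h, by rw [h']; norm_num⟩
    · exact Or.inr ⟨h, by rw [h']; norm_num⟩

lemma posRoots_eq : posRoots n =
    (pairs n).image (fun p => cb n p.1 p.2 1 (-1)) ∪
    (pairs n).image (fun p => cb n p.1 p.2 1 1) := by
  unfold posRoots pairs
  congr 1
  · exact Finset.image_congr (fun x _ => single_sub x.1 x.2)
  · exact Finset.image_congr (fun x _ => single_add x.1 x.2)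

lemma cb_injOn (d : ℚ) (hd : d = 1 ∨ d = -1) :
    Set.InjOn (fun p : Fin (n+1) × Fin (n+1) => cb n p.1 p.2 1 d) (pairs n) := by
  intro p hp q hq h
  rw [Finset.mem_coe, mem_pairs] at hp hq
  rcases cb_inj (ne_of_lt hp) (ne_of_lt hq) one_ne_zero (pm_ne_zero hd) one_ne_zero
      (pm_ne_zero hd) h with ⟨h1, h2, _, _⟩ | ⟨h1, h2, _, _⟩
  · exact Prod.ext h1.symm h2.symm
  · rw [h1, h2] at hq
    exact absurd hq (not_lt.2 hp.le)
lemma disj : Disjoint ((pairs n).image fun p : Fin (n+1) × Fin (n+1) => cb n p.1 p.2 1 (-1))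
    ((pairs n).image fun p : Fin (n+1) × Fin (n+1) => cb n p.1 p.2 1 1) := by
  rw [Finset.disjoint_left]
  rintro α hm hp
  obtain ⟨p, hp1, rfl⟩ := Finset.mem_image.1 hm
  obtain ⟨q, hq1, he⟩ := Finset.mem_image.1 hp
  rw [mem_pairs] at hp1 hq1
  rcases cb_inj (ne_of_lt hq1) (ne_of_lt hp1) one_ne_zero one_ne_zero one_ne_zero
      (by norm_num : (-1:ℚ) ≠ 0) he with ⟨h1, h2, _, h4⟩ | ⟨h1, h2, _, _⟩
  · norm_num at h4
  · rw [← h2] at hq1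
    rw [← h1] at hq1
    exact absurd (hp1.trans hq1) (lt_irrefl _)

lemma lenOf_eq (f : (Fin (n+1) → ℚ) → (Fin (n+1) → ℚ)) :
    lenOf n f = ((pairs n).filter (fun p => -(f (cb n p.1 p.2 1 (-1))) ∈ posRoots n)).card
      + ((pairs n).filter (fun p => -(f (cb n p.1 p.2 1 1)) ∈ posRoots n)).card := by
  unfold lenOf
  rw [posRoots_eq, filter_union,
    card_union_of_disjoint (Finset.disjoint_filter_filter disj),
    Finset.filter_image, Finset.filter_image,
    Finset.card_image_of_injOn ((cb_injOn (-1) (Or.inr rfl)).mono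
      (by exact_mod_cast Finset.filter_subset _ _)),
    Finset.card_image_of_injOn ((cb_injOn 1 (Or.inl rfl)).mono
      (by exact_mod_cast Finset.filter_subset _ _))]

lemma card_filter_snd (t : Fin (n+1)) :
    ((pairs n).filter fun p => p.2 = t).card = (t : ℕ) := by
  rw [← Fin.card_Iio t]
  refine (Finset.card_nbij (fun a => (a, t)) ?_ ?_ ?_).symm
  · intro a ha
    rw [Finset.mem_coe, Finset.mem_filter, mem_pairs]
    exact ⟨Finset.mem_Iio.1 ha, rfl⟩
  · intro a _ b _ h
    exact congrArg Prod.fst h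
  · intro p hp
    rw [Finset.mem_coe, Finset.mem_filter, mem_pairs] at hp
    obtain ⟨h1, h2⟩ := hp
    exact ⟨p.1, by rw [Finset.mem_coe, Finset.mem_Iio]; exact h2 ▸ h1,
      Prod.ext rfl h2.symm⟩

lemma card_filter_fst (t : Fin (n+1)) :
    ((pairs n).filter fun p => p.1 = t).card = n - (t : ℕ) := by
  have : (Finset.Ioi t).card = n - (t : ℕ) := by rw [Fin.card_Ioi]; omega
  rw [← this]
  refine (Finset.card_nbij (fun a => (t, a)) ?_ ?_ ?_).symm
  · intro a ha
    rw [Finset.mem_coe, Finset.mem_filter, mem_pairs]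
    exact ⟨Finset.mem_Ioi.1 ha, rfl⟩
  · intro a _ b _ h
    exact congrArg Prod.snd h
  · intro p hp
    rw [Finset.mem_coe, Finset.mem_filter, mem_pairs] at hp
    obtain ⟨h1, h2⟩ := hp
    exact ⟨p.2, by rw [Finset.mem_coe, Finset.mem_Ioi]; exact h2 ▸ h1,
      Prod.ext h2.symm rfl⟩

-- PART 3
lemma sroot_lt {k : ℕ} (h2 : k < n) :
    sroot n k = cb n ⟨k, by omega⟩ ⟨k+1, by omega⟩ 1 (-1) := by
  funext l
  rw [sroot, if_pos h2]
  simp only [cb, Fin.ext_iff, Fin.val_mk]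
  split_ifs <;> (first | (exfalso; omega) | norm_num)

lemma sroot_last (h1 : 1 ≤ n) :
    sroot n n = cb n ⟨n-1, by omega⟩ ⟨n, by omega⟩ 1 1 := by
  funext l
  rw [sroot, if_neg (lt_irrefl n)]
  simp only [cb, Fin.ext_iff, Fin.val_mk]
  split_ifs <;> (first | (exfalso; omega) | norm_num)

def cyc (n : ℕ) : Equiv.Perm (Fin (n+1)) where
  toFun i := ⟨if (i : ℕ) = n then 0 else (i:ℕ)+1, by have := i.isLt; split <;> omega⟩
  invFun j := ⟨if (j : ℕ) = 0 then n else (j:ℕ)-1, by have := j.isLt; split <;> omega⟩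
  left_inv := fun i => by
    have hi := i.isLt
    apply Fin.ext
    show (if (((⟨if (i : ℕ) = n then 0 else (i:ℕ)+1, _⟩ : Fin (n+1))) : ℕ) = 0
      then n else _) = (i:ℕ)
    simp only [Fin.val_mk]
    split <;> split <;> omega
  right_inv := fun j => by
    have hj := j.isLt
    apply Fin.ext
    show (if (((⟨if (j : ℕ) = 0 then n else (j:ℕ)-1, _⟩ : Fin (n+1))) : ℕ) = n
      then 0 else _) = (j:ℕ)
    simp only [Fin.val_mk]
    split <;> split <;> omega

lemma cyc_val (i : Fin (n+1)) : ((cyc n) i : ℕ) = if (i:ℕ) = n then 0 else (i:ℕ)+1 := rfl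
lemma cyc_inv_val (j : Fin (n+1)) :
    ((cyc n)⁻¹ j : ℕ) = if (j:ℕ) = 0 then n else (j:ℕ)-1 := rfl

lemma cyc_mk {a b : ℕ} (ha : a < n+1) (hb : b < n+1)
    (h : (a = n ∧ b = 0) ∨ (a < n ∧ b = a+1)) : cyc n ⟨a, ha⟩ = ⟨b, hb⟩ := by
  apply Fin.ext
  rw [cyc_val]
  simp only [Fin.val_mk]
  split_ifs <;> omega

lemma mk_lt {a b : ℕ} (ha : a < n+1) (hb : b < n+1) (h : a < b) :
    (⟨a, ha⟩ : Fin (n+1)) < ⟨b, hb⟩ := by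
  rw [Fin.lt_def]; simp only [Fin.val_mk]; exact h

lemma mk_ne {a b : ℕ} (ha : a < n+1) (hb : b < n+1) (h : a ≠ b) :
    (⟨a, ha⟩ : Fin (n+1)) ≠ ⟨b, hb⟩ := by
  rw [Ne, Fin.ext_iff]; simp only [Fin.val_mk]; exact h

lemma mkmem {a b : ℕ} (ha : a < n+1) (hb : b < n+1) (h : a < b) {d : ℚ}
    (hd : d = 1 ∨ d = -1) : cb n ⟨a, ha⟩ ⟨b, hb⟩ 1 d ∈ posRoots n :=
  (cb_mem_posRoots (mk_ne ha hb (Nat.ne_of_lt h)) (Or.inl rfl) hd).mpr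
    (Or.inl ⟨mk_lt ha hb h, rfl⟩)

lemma wplus_hf : ∀ (v : Fin (n+1) → ℚ) i, wplusFun n v i = (1:ℚ) * v ((cyc n)⁻¹ i) := by
  intro v i
  rw [one_mul]
  show (if (i : ℕ) = 0 then v (Fin.last n) else _) = _
  by_cases h : (i:ℕ) = 0
  · rw [if_pos h]
    congr 1
    apply Fin.ext
    rw [cyc_inv_val, if_pos h, Fin.val_last]
  · rw [if_neg h]
    congr 1
    apply Fin.ext
    rw [cyc_inv_val, if_neg h]

def epsm (n : ℕ) : Fin (n+1) → ℚ := fun i => if (i:ℕ) = 0 ∨ (i:ℕ) = n then -1 else 1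

lemma epsm_sgn : ∀ i, epsm n i = 1 ∨ epsm n i = -1 := by
  intro i; unfold epsm; split_ifs <;> simp

lemma epsm_mk_one {a : ℕ} (ha : a < n+1) (h0 : a ≠ 0) (h1 : a ≠ n) :
    epsm n ⟨a, ha⟩ = 1 := by
  show (if (a = 0 ∨ a = n) then (-1:ℚ) else 1) = 1
  rw [if_neg (by omega)]

lemma epsm_mk_neg {a : ℕ} (ha : a < n+1) (h : a = 0 ∨ a = n) :
    epsm n ⟨a, ha⟩ = -1 := by
  show (if (a = 0 ∨ a = n) then (-1:ℚ) else 1) = -1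
  rw [if_pos h]

lemma epsm_prod (h1 : 1 ≤ n) : ∏ i, epsm n i = 1 := by
  have h0 : (0 : Fin (n+1)) ≠ Fin.last n := by
    rw [Ne, Fin.ext_iff, Fin.val_last, Fin.val_zero]
    omega
  rw [← Finset.prod_mul_prod_compl {(0 : Fin (n+1)), Fin.last n} (epsm n),
      Finset.prod_pair h0]
  have hc : ∏ i ∈ ({(0 : Fin (n+1)), Fin.last n} : Finset (Fin (n+1)))ᶜ, epsm n i = 1 := by
    apply Finset.prod_eq_one
    intro i hi
    rw [Finset.mem_compl, Finset.mem_insert, Finset.mem_singleton] at hi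
    push_neg at hi
    rw [epsm]
    rw [if_neg]
    rintro (hh | hh)
    · exact hi.1 (by apply Fin.ext; rw [hh, Fin.val_zero])
    · exact hi.2 (by apply Fin.ext; rw [hh, Fin.val_last])
  have e0 : epsm n (0 : Fin (n+1)) = -1 := by
    rw [epsm]; rw [if_pos (Or.inl (Fin.val_zero _))]
  have el : epsm n (Fin.last n) = -1 := by
    rw [epsm]; rw [if_pos (Or.inr (Fin.val_last _))]
  rw [hc, e0, el]
  norm_num

lemma wminus_hf (hn : 2 ≤ n) :
    ∀ (v : Fin (n+1) → ℚ) i, wminusFun n v i = epsm n i * v ((cyc n)⁻¹ i) := by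
  intro v i
  show (if (i : ℕ) = 0 then -(v (Fin.last n)) else _) = _
  by_cases h : (i:ℕ) = 0
  · rw [if_pos h, epsm]
    rw [if_pos (Or.inl h)]
    have : (cyc n)⁻¹ i = Fin.last n := by
      apply Fin.ext; rw [cyc_inv_val, if_pos h, Fin.val_last]
    rw [this]; ring
  · rw [if_neg h]
    by_cases h2 : (i:ℕ) = n
    · rw [if_pos h2, epsm]
      rw [if_pos (Or.inr h2)]
      have : (cyc n)⁻¹ i = ⟨n - 1, Nat.lt_succ_of_le (Nat.sub_le _ _)⟩ := by
        apply Fin.ext; rw [cyc_inv_val, if_neg h, Fin.val_mk, h2]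
      rw [this]; ring
    · rw [if_neg h2, epsm]
      rw [if_neg (by tauto)]
      have : (cyc n)⁻¹ i = ⟨(i:ℕ) - 1, Nat.lt_of_le_of_lt (Nat.sub_le _ _) i.isLt⟩ := by
        apply Fin.ext; rw [cyc_inv_val, if_neg h]
      rw [this]; ring

lemma wplus_wp (hn : 2 ≤ n) (k : ℕ) (h1 : 1 ≤ k) (h2 : k ≤ n) :
    ∃ β ∈ posRoots n, wplusFun n β = sroot n k := by
  by_cases hk : k < n
  · refine ⟨cb n ⟨k-1, by omega⟩ ⟨k, by omega⟩ 1 (-1), mkmem _ _ (by omega) (Or.inr rfl), ?_⟩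
    rw [f_cb wplus_hf, sroot_lt hk,
        cyc_mk (by omega) (by omega : k < n+1) (Or.inr ⟨by omega, by omega⟩),
        cyc_mk (by omega) (by omega : k+1 < n+1) (Or.inr ⟨by omega, rfl⟩)]
    norm_num
  · have hk' : k = n := by omega
    rw [hk']
    refine ⟨cb n ⟨n-2, by omega⟩ ⟨n-1, by omega⟩ 1 1, mkmem _ _ (by omega) (Or.inl rfl), ?_⟩
    rw [f_cb wplus_hf, sroot_last (by omega),
        cyc_mk (by omega) (by omega : n-1 < n+1) (Or.inr ⟨by omega, by omega⟩),
        cyc_mk (by omega) (by omega : n < n+1) (Or.inr ⟨by omega, by omega⟩)]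
    norm_num

lemma wminus_wp (hn : 2 ≤ n) (k : ℕ) (h1 : 1 ≤ k) (h2 : k ≤ n) :
    ∃ β ∈ posRoots n, wminusFun n β = sroot n k := by
  by_cases hk : k ≤ n - 2
  · refine ⟨cb n ⟨k-1, by omega⟩ ⟨k, by omega⟩ 1 (-1), mkmem _ _ (by omega) (Or.inr rfl), ?_⟩
    rw [f_cb (wminus_hf hn), sroot_lt (by omega),
        cyc_mk (by omega) (by omega : k < n+1) (Or.inr ⟨by omega, by omega⟩),
        cyc_mk (by omega) (by omega : k+1 < n+1) (Or.inr ⟨by omega, rfl⟩),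
        epsm_mk_one _ (by omega) (by omega), epsm_mk_one _ (by omega) (by omega)]
    norm_num
  · by_cases hk2 : k = n - 1
    · rw [hk2]
      refine ⟨cb n ⟨n-2, by omega⟩ ⟨n-1, by omega⟩ 1 1, mkmem _ _ (by omega) (Or.inl rfl), ?_⟩
      rw [f_cb (wminus_hf hn), sroot_lt (by omega : n-1 < n),
          cyc_mk (by omega) (by omega : n-1 < n+1) (Or.inr ⟨by omega, by omega⟩),
          cyc_mk (by omega) (by omega : n-1+1 < n+1) (Or.inr ⟨by omega, by omega⟩),
          epsm_mk_one _ (by omega) (by omega), epsm_mk_neg _ (Or.inr (by omega))]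
      norm_num
    · have hk3 : k = n := by omega
      rw [hk3]
      refine ⟨cb n ⟨n-2, by omega⟩ ⟨n-1, by omega⟩ 1 (-1), mkmem _ _ (by omega) (Or.inr rfl), ?_⟩
      rw [f_cb (wminus_hf hn), sroot_last (by omega),
          cyc_mk (by omega) (by omega : n-1 < n+1) (Or.inr ⟨by omega, by omega⟩),
          cyc_mk (by omega) (by omega : n < n+1) (Or.inr ⟨by omega, by omega⟩),
          epsm_mk_one _ (by omega) (by omega), epsm_mk_neg _ (Or.inr rfl)]
      norm_num

lemma lenOf_wplus (hn : 2 ≤ n) : lenOf n (wplusFun n) = n := by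
  rw [lenOf_eq]
  have hA : ((pairs n).filter (fun p => -(wplusFun n (cb n p.1 p.2 1 (-1))) ∈ posRoots n))
      = (pairs n).filter (fun p => p.2 = Fin.last n) := by
    apply Finset.filter_congr
    intro p hp
    rw [mem_pairs] at hp
    rw [negmem wplus_hf (fun _ => Or.inl rfl) (ne_of_lt hp) (Or.inr rfl)]
    have hp' := Fin.lt_def.1 hp
    have h2 := p.2.isLt
    constructor
    · rintro (⟨_, hc⟩ | ⟨hlt, _⟩)
      · norm_num at hc
      · rw [Fin.lt_def, cyc_val, cyc_val] at hlt
        apply Fin.ext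
        rw [Fin.val_last]
        split_ifs at hlt <;> omega
    · intro hp2
      refine Or.inr ⟨?_, by norm_num⟩
      rw [Fin.lt_def, cyc_val, cyc_val]
      have hv : (p.2 : ℕ) = n := by rw [hp2, Fin.val_last]
      rw [if_pos hv, if_neg (by omega)]
      omega
  have hB : ((pairs n).filter (fun p => -(wplusFun n (cb n p.1 p.2 1 1)) ∈ posRoots n))
      = ∅ := by
    rw [Finset.eq_empty_iff_forall_notMem]
    intro p hp
    rw [Finset.mem_filter, mem_pairs] at hp
    obtain ⟨hp1, hp2⟩ := hp
    rw [negmem wplus_hf (fun _ => Or.inl rfl) (ne_of_lt hp1) (Or.inl rfl)] at hp2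
    rcases hp2 with ⟨_, hc⟩ | ⟨_, hc⟩ <;> norm_num at hc
  rw [hA, hB, card_filter_snd, Finset.card_empty, add_zero, Fin.val_last]

lemma epsm_cyc_neg_iff (a : Fin (n+1)) :
    epsm n (cyc n a) = -1 ↔ (a:ℕ) = n ∨ (a:ℕ) = n - 1 := by
  have ha := a.isLt
  rw [epsm]
  constructor
  · intro h
    by_cases hc : ((cyc n a : Fin (n+1)):ℕ) = 0 ∨ ((cyc n a : Fin (n+1)):ℕ) = n
    · rw [cyc_val] at hc
      rcases hc with hc | hc <;> (split_ifs at hc <;> omega)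
    · rw [if_neg hc] at h; norm_num at h
  · intro h
    have hc : ((cyc n a):ℕ) = 0 ∨ ((cyc n a):ℕ) = n := by
      rw [cyc_val]; split_ifs <;> omega
    rw [if_pos hc]

lemma lenOf_wminus (hn : 2 ≤ n) : lenOf n (wminusFun n) = n := by
  rw [lenOf_eq]
  have hA : ((pairs n).filter (fun p => -(wminusFun n (cb n p.1 p.2 1 (-1))) ∈ posRoots n))
      = ∅ := by
    rw [Finset.eq_empty_iff_forall_notMem]
    intro p hp
    rw [Finset.mem_filter, mem_pairs] at hp
    obtain ⟨hp1, hp2⟩ := hp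
    rw [negmem (wminus_hf hn) epsm_sgn (ne_of_lt hp1) (Or.inr rfl)] at hp2
    have hv1 := p.1.isLt
    have hv2 := p.2.isLt
    have hp' := Fin.lt_def.1 hp1
    rcases hp2 with ⟨hlt, hc⟩ | ⟨hlt, hc⟩
    · rw [epsm_cyc_neg_iff] at hc
      rw [Fin.lt_def, cyc_val, cyc_val] at hlt
      rcases hc with hc | hc <;> (split_ifs at hlt <;> omega)
    · rw [Fin.lt_def, cyc_val, cyc_val] at hlt
      have h2n : (p.2:ℕ) = n := by split_ifs at hlt <;> omega
      have he : epsm n (cyc n p.2) = -1 := (epsm_cyc_neg_iff p.2).mpr (Or.inl h2n)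
      rw [he] at hc
      norm_num at hc
  have hB : ((pairs n).filter (fun p => -(wminusFun n (cb n p.1 p.2 1 1)) ∈ posRoots n))
      = (pairs n).filter (fun p => p.2 = Fin.last n) := by
    apply Finset.filter_congr
    intro p hp
    rw [mem_pairs] at hp
    rw [negmem (wminus_hf hn) epsm_sgn (ne_of_lt hp) (Or.inl rfl)]
    have hp' := Fin.lt_def.1 hp
    have hv2 := p.2.isLt
    constructor
    · rintro (⟨hlt, hc⟩ | ⟨hlt, _⟩)
      · rw [epsm_cyc_neg_iff] at hc
        rw [Fin.lt_def, cyc_val, cyc_val] at hlt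
        exfalso
        rcases hc with hc | hc <;> (split_ifs at hlt <;> omega)
      · rw [Fin.lt_def, cyc_val, cyc_val] at hlt
        apply Fin.ext
        rw [Fin.val_last]
        split_ifs at hlt <;> omega
    · intro hp2
      have h2n : (p.2 : ℕ) = n := by rw [hp2, Fin.val_last]
      refine Or.inr ⟨?_, ?_⟩
      · rw [Fin.lt_def, cyc_val, cyc_val, if_pos h2n, if_neg (by omega)]
        omega
      · rw [mul_one]
        exact (epsm_cyc_neg_iff p.2).mpr (Or.inl h2n)
  rw [hA, hB, card_filter_snd, Finset.card_empty, zero_add, Fin.val_last]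

-- PART 4

set_option maxHeartbeats 1600000 in
lemma forward (hn : 2 ≤ n) (f : (Fin (n+1) → ℚ) → (Fin (n+1) → ℚ))
    (σ : Equiv.Perm (Fin (n+1))) (ε : Fin (n+1) → ℚ)
    (hsgn : ∀ i, ε i = 1 ∨ ε i = -1) (hprod : ∏ i, ε i = 1)
    (hf : ∀ v i, f v i = ε i * v (σ⁻¹ i))
    (hwp : ∀ k : ℕ, 1 ≤ k → k ≤ n → ∃ β ∈ posRoots n, f β = sroot n k)
    (hlen : lenOf n f = n) :
    f = wplusFun n ∨ f = wminusFun n := by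
  have hene : ∀ x, ε x ≠ 0 := fun x => pm_ne_zero (hsgn x)
  -- Step 1: adjacent conditions
  have hC : ∀ k (hk1 : 1 ≤ k) (hk2 : k < n),
      (σ⁻¹ ⟨k, by omega⟩ < σ⁻¹ ⟨k+1, by omega⟩ ∧ ε ⟨k, by omega⟩ = 1) ∨
      (σ⁻¹ ⟨k+1, by omega⟩ < σ⁻¹ ⟨k, by omega⟩ ∧ ε ⟨k+1, by omega⟩ = -1) := by
    intro k hk1 hk2
    obtain ⟨β, hβ, hfβ⟩ := hwp k hk1 (by omega)
    rw [mem_posRoots] at hβ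
    obtain ⟨a, b, hab, hor⟩ := hβ
    have hab' : a ≠ b := ne_of_lt hab
    have hsne : σ a ≠ σ b := fun h => hab' (σ.injective h)
    have hkne : (⟨k, by omega⟩ : Fin (n+1)) ≠ ⟨k+1, by omega⟩ := mk_ne _ _ (by omega)
    have e1 : ∀ x (h : σ x = (⟨k, by omega⟩ : Fin (n+1))), σ⁻¹ ⟨k, by omega⟩ = x := by
      intro x h; rw [← h, Equiv.Perm.inv_def, Equiv.symm_apply_apply]
    have e2 : ∀ x (h : σ x = (⟨k+1, by omega⟩ : Fin (n+1))), σ⁻¹ ⟨k+1, by omega⟩ = x := by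
      intro x h; rw [← h, Equiv.Perm.inv_def, Equiv.symm_apply_apply]
    rcases hor with rfl | rfl
    · rw [f_cb hf, sroot_lt hk2] at hfβ
      rcases cb_inj hsne hkne (mul_ne_zero (hene _) one_ne_zero)
          (mul_ne_zero (hene _) (by norm_num)) one_ne_zero (by norm_num) hfβ with
        ⟨h1, h2, h3, h4⟩ | ⟨h1, h2, h3, h4⟩
      · left
        refine ⟨?_, ?_⟩
        · rw [e1 a h1.symm, e2 b h2.symm]; exact hab
        · rw [h1]; linarith
      · right
        refine ⟨?_, ?_⟩
        · rw [e1 b h1.symm, e2 a h2.symm]; exact hab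
        · rw [h2]; linarith
    · rw [f_cb hf, sroot_lt hk2] at hfβ
      rcases cb_inj hsne hkne (mul_ne_zero (hene _) one_ne_zero)
          (mul_ne_zero (hene _) one_ne_zero) one_ne_zero (by norm_num) hfβ with
        ⟨h1, h2, h3, h4⟩ | ⟨h1, h2, h3, h4⟩
      · left
        refine ⟨?_, ?_⟩
        · rw [e1 a h1.symm, e2 b h2.symm]; exact hab
        · rw [h1]; linarith
      · right
        refine ⟨?_, ?_⟩
        · rw [e1 b h1.symm, e2 a h2.symm]; exact hab
        · rw [h2]; linarith
  have hCn :
      (σ⁻¹ ⟨n-1, by omega⟩ < σ⁻¹ ⟨n, by omega⟩ ∧ ε ⟨n-1, by omega⟩ = 1) ∨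
      (σ⁻¹ ⟨n, by omega⟩ < σ⁻¹ ⟨n-1, by omega⟩ ∧ ε ⟨n, by omega⟩ = 1) := by
    obtain ⟨β, hβ, hfβ⟩ := hwp n (by omega) le_rfl
    rw [mem_posRoots] at hβ
    obtain ⟨a, b, hab, hor⟩ := hβ
    have hab' : a ≠ b := ne_of_lt hab
    have hsne : σ a ≠ σ b := fun h => hab' (σ.injective h)
    have hkne : (⟨n-1, by omega⟩ : Fin (n+1)) ≠ ⟨n, by omega⟩ := mk_ne _ _ (by omega)
    have e1 : ∀ x (h : σ x = (⟨n-1, by omega⟩ : Fin (n+1))), σ⁻¹ ⟨n-1, by omega⟩ = x := by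
      intro x h; rw [← h, Equiv.Perm.inv_def, Equiv.symm_apply_apply]
    have e2 : ∀ x (h : σ x = (⟨n, by omega⟩ : Fin (n+1))), σ⁻¹ ⟨n, by omega⟩ = x := by
      intro x h; rw [← h, Equiv.Perm.inv_def, Equiv.symm_apply_apply]
    rcases hor with rfl | rfl
    · rw [f_cb hf, sroot_last (by omega)] at hfβ
      rcases cb_inj hsne hkne (mul_ne_zero (hene _) one_ne_zero)
          (mul_ne_zero (hene _) (by norm_num)) one_ne_zero one_ne_zero hfβ with
        ⟨h1, h2, h3, h4⟩ | ⟨h1, h2, h3, h4⟩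
      · left
        refine ⟨?_, ?_⟩
        · rw [e1 a h1.symm, e2 b h2.symm]; exact hab
        · rw [h1]; linarith
      · right
        refine ⟨?_, ?_⟩
        · rw [e1 b h1.symm, e2 a h2.symm]; exact hab
        · rw [h2]; linarith
    · rw [f_cb hf, sroot_last (by omega)] at hfβ
      rcases cb_inj hsne hkne (mul_ne_zero (hene _) one_ne_zero)
          (mul_ne_zero (hene _) one_ne_zero) one_ne_zero one_ne_zero hfβ with
        ⟨h1, h2, h3, h4⟩ | ⟨h1, h2, h3, h4⟩
      · left
        refine ⟨?_, ?_⟩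
        · rw [e1 a h1.symm, e2 b h2.symm]; exact hab
        · rw [h1]; linarith
      · right
        refine ⟨?_, ?_⟩
        · rw [e1 b h1.symm, e2 a h2.symm]; exact hab
        · rw [h2]; linarith
  -- Step 2: ascending chain
  have key : ∀ j k (hk1 : 1 ≤ k) (hk2 : k < n), k = n - 1 - j →
      (σ⁻¹ ⟨k, by omega⟩ < σ⁻¹ ⟨k+1, by omega⟩ ∧ ε ⟨k, by omega⟩ = 1) := by
    intro j
    induction j with
    | zero =>
      intro k hk1 hk2 hkj
      rcases hC k hk1 hk2 with h | ⟨hlt, he⟩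
      · exact h
      · exfalso
        have ekn : (⟨k+1, by omega⟩ : Fin (n+1)) = ⟨n, by omega⟩ := by
          apply Fin.ext; simp only [Fin.val_mk]; omega
        have ekn1 : (⟨k, by omega⟩ : Fin (n+1)) = ⟨n-1, by omega⟩ := by
          apply Fin.ext; simp only [Fin.val_mk]; omega
        rw [ekn, ekn1] at hlt
        rw [ekn] at he
        rcases hCn with ⟨h1, _⟩ | ⟨_, h2⟩
        · exact absurd h1 (lt_asymm hlt)
        · rw [h2] at he; norm_num at he
    | succ j ih =>
      intro k hk1 hk2 hkj
      rcases hC k hk1 hk2 with h | ⟨hlt, he⟩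
      · exact h
      · exfalso
        have h1 := (ih (k+1) (by omega) (by omega) (by omega)).2
        have : (1:ℚ) = -1 := h1.symm.trans he
        norm_num at this
  have hASC : ∀ k (hk1 : 1 ≤ k) (hk2 : k < n),
      (σ⁻¹ ⟨k, by omega⟩ < σ⁻¹ ⟨k+1, by omega⟩ ∧ ε ⟨k, by omega⟩ = 1) :=
    fun k hk1 hk2 => key (n - 1 - k) k hk1 hk2 (by omega)
  -- Step 3: monotonicity
  have hMONO : ∀ a b (ha : 1 ≤ a) (hab : a < b) (hbn : b ≤ n),
      σ⁻¹ ⟨a, by omega⟩ < σ⁻¹ ⟨b, by omega⟩ := by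
    intro a b
    induction b with
    | zero => intro _ hab _; omega
    | succ b ih =>
      intro ha hab hbn
      by_cases heq : a = b
      · subst heq
        exact (hASC a ha (by omega)).1
      · exact lt_trans (ih ha (by omega) (by omega)) (hASC b (by omega) (by omega)).1
  -- Step 4: lower bound
  have hLB : ∀ k (hk1 : 1 ≤ k) (hk2 : k ≤ n), (k:ℕ) - 1 ≤ ((σ⁻¹ ⟨k, by omega⟩ : Fin (n+1)) : ℕ) := by
    intro k
    induction k with
    | zero => intro h _; omega
    | succ k ih =>
      intro _ hk2
      by_cases hk0 : k = 0
      · subst hk0; omega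
      · have h1 := ih (by omega) (by omega)
        have h2 := (hASC k (by omega) (by omega)).1
        rw [Fin.lt_def] at h2
        omega
  -- Step 5: epsilon structure
  have h0ne : (0 : Fin (n+1)) ≠ Fin.last n := by
    rw [Ne, Fin.ext_iff, Fin.val_zero, Fin.val_last]; omega
  have hmid : ∀ i : Fin (n+1), i ≠ 0 → i ≠ Fin.last n → ε i = 1 := by
    intro i hi0 hil
    have h1 : 1 ≤ (i:ℕ) := by
      rcases Nat.eq_zero_or_pos (i:ℕ) with h | h
      · exact absurd (Fin.ext (by rw [h, Fin.val_zero])) hi0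
      · omega
    have h2 : (i:ℕ) < n := by
      have := i.isLt
      rcases Nat.lt_or_ge (i:ℕ) n with h | h
      · exact h
      · exact absurd (Fin.ext (by rw [Fin.val_last]; omega)) hil
    have := (hASC (i:ℕ) h1 h2).2
    have heta : (⟨(i:ℕ), by omega⟩ : Fin (n+1)) = i := Fin.eta i _
    rwa [heta] at this
  have heps : ε 0 * ε (Fin.last n) = 1 := by
    rw [← hprod, ← Finset.prod_mul_prod_compl {(0 : Fin (n+1)), Fin.last n} ε,
        Finset.prod_pair h0ne]
    have hc : ∏ i ∈ ({(0 : Fin (n+1)), Fin.last n} : Finset (Fin (n+1)))ᶜ, ε i = 1 := by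
      apply Finset.prod_eq_one
      intro i hi
      rw [Finset.mem_compl, Finset.mem_insert, Finset.mem_singleton] at hi
      push_neg at hi
      exact hmid i hi.1 hi.2
    rw [hc, mul_one]
  have heq : ε 0 = ε (Fin.last n) := by
    rcases hsgn 0 with h | h <;> rcases hsgn (Fin.last n) with g | g <;>
      rw [h, g] at heps ⊢ <;> first | rfl | norm_num at heps
  -- Step 6: sigma-inv 0 = last
  have hM : σ⁻¹ 0 = Fin.last n := by
    by_contra hMne
    have hMlt : ((σ⁻¹ 0 : Fin (n+1)) : ℕ) < n := by
      have := (σ⁻¹ 0).isLt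
      rcases Nat.lt_or_ge ((σ⁻¹ 0 : Fin (n+1)) : ℕ) n with h | h
      · exact h
      · exact absurd (Fin.ext (by rw [Fin.val_last]; omega)) hMne
    -- key sub-step: inversions only at pairs with sigma p.2 = 0
    have hkey : ∀ p : Fin (n+1) × Fin (n+1), p.1 < p.2 → σ p.2 < σ p.1 → p.2 = σ⁻¹ 0 := by
      intro p hp1 hlt
      have h0 : σ p.2 = 0 := by
        by_contra h0
        have hpos : 1 ≤ ((σ p.2 : Fin (n+1)) : ℕ) := by
          rcases Nat.eq_zero_or_pos ((σ p.2 : Fin (n+1)) : ℕ) with h | h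
          · exact absurd (Fin.ext (by rw [h, Fin.val_zero])) h0
          · omega
        have hub : ((σ p.1 : Fin (n+1)) : ℕ) ≤ n := by have := (σ p.1).isLt; omega
        have hmono := hMONO ((σ p.2 : Fin (n+1)) : ℕ) ((σ p.1 : Fin (n+1)) : ℕ)
          hpos (Fin.lt_def.1 hlt) hub
        rw [Fin.eta, Fin.eta, Equiv.Perm.inv_def, Equiv.symm_apply_apply, Equiv.symm_apply_apply] at hmono
        exact absurd (hp1.trans hmono) (lt_irrefl _)
      rw [← h0, Equiv.Perm.inv_def, Equiv.symm_apply_apply]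
    rcases hsgn (Fin.last n) with hel | hel
    · -- all epsilon = 1
      have hall : ∀ i, ε i = 1 := by
        intro i
        by_cases hi0 : i = 0
        · rw [hi0, heq, hel]
        · by_cases hil : i = Fin.last n
          · rw [hil, hel]
          · exact hmid i hi0 hil
      have hB : ((pairs n).filter (fun p => -(f (cb n p.1 p.2 1 1)) ∈ posRoots n)) = ∅ := by
        rw [Finset.eq_empty_iff_forall_notMem]
        intro p hp
        rw [Finset.mem_filter, mem_pairs] at hp
        obtain ⟨hp1, hp2⟩ := hp
        rw [negmem hf hsgn (ne_of_lt hp1) (Or.inl rfl)] at hp2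
        rcases hp2 with ⟨_, hc⟩ | ⟨_, hc⟩ <;> rw [hall] at hc
        · norm_num at hc
        · rw [mul_one] at hc; norm_num at hc
      have hsub : ((pairs n).filter (fun p => -(f (cb n p.1 p.2 1 (-1))) ∈ posRoots n)) ⊆
          (pairs n).filter (fun p => p.2 = σ⁻¹ 0) := by
        intro p hp
        rw [Finset.mem_filter, mem_pairs] at hp
        obtain ⟨hp1, hp2⟩ := hp
        rw [negmem hf hsgn (ne_of_lt hp1) (Or.inr rfl)] at hp2
        rw [Finset.mem_filter, mem_pairs]
        rcases hp2 with ⟨_, hc⟩ | ⟨hlt, _⟩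
        · rw [hall] at hc; norm_num at hc
        · exact ⟨hp1, hkey p hp1 hlt⟩
      have hle : lenOf n f ≤ ((σ⁻¹ 0 : Fin (n+1)) : ℕ) := by
        rw [lenOf_eq f, hB, Finset.card_empty, add_zero]
        calc ((pairs n).filter (fun p => -(f (cb n p.1 p.2 1 (-1))) ∈ posRoots n)).card
            ≤ ((pairs n).filter (fun p => p.2 = σ⁻¹ 0)).card := Finset.card_le_card hsub
          _ = _ := card_filter_snd _
      omega
    · -- epsilon 0 = epsilon last = -1
      have he0 : ε 0 = -1 := by rw [heq, hel]
      have hBsup : (pairs n).filter (fun p => p.1 = σ⁻¹ 0 ∨ p.2 = σ⁻¹ 0) ⊆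
          ((pairs n).filter (fun p => -(f (cb n p.1 p.2 1 1)) ∈ posRoots n)) := by
        intro p hp
        rw [Finset.mem_filter, mem_pairs] at hp
        obtain ⟨hp1, hp2⟩ := hp
        rw [Finset.mem_filter, mem_pairs]
        refine ⟨hp1, ?_⟩
        rw [negmem hf hsgn (ne_of_lt hp1) (Or.inl rfl)]
        rcases hp2 with hc | hc
        · left
          have hs1 : σ p.1 = 0 := by rw [hc, Equiv.Perm.inv_def, Equiv.apply_symm_apply]
          refine ⟨?_, by rw [hs1, he0]⟩
          rw [hs1]
          have : σ p.2 ≠ 0 := by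
            intro h
            have : p.2 = σ⁻¹ 0 := by rw [← h, Equiv.Perm.inv_def, Equiv.symm_apply_apply]
            rw [this, ← hc] at hp1
            exact absurd hp1 (lt_irrefl _)
          exact Fin.pos_of_ne_zero this
        · right
          have hs2 : σ p.2 = 0 := by rw [hc, Equiv.Perm.inv_def, Equiv.apply_symm_apply]
          refine ⟨?_, by rw [hs2, mul_one, he0]⟩
          rw [hs2]
          have : σ p.1 ≠ 0 := by
            intro h
            have : p.1 = σ⁻¹ 0 := by rw [← h, Equiv.Perm.inv_def, Equiv.symm_apply_apply]
            rw [this, ← hc] at hp1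
            exact absurd hp1 (lt_irrefl _)
          exact Fin.pos_of_ne_zero this
      have hAmem : (σ⁻¹ 0, Fin.last n) ∈
          ((pairs n).filter (fun p => -(f (cb n p.1 p.2 1 (-1))) ∈ posRoots n)) := by
        rw [Finset.mem_filter, mem_pairs]
        have hMlast : (σ⁻¹ 0 : Fin (n+1)) < Fin.last n :=
          lt_of_le_of_ne (Fin.le_last _) hMne
        refine ⟨hMlast, ?_⟩
        rw [negmem hf hsgn (ne_of_lt hMlast) (Or.inr rfl)]
        left
        have hs1 : σ (σ⁻¹ 0) = (0 : Fin (n+1)) := Equiv.apply_symm_apply σ 0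
        refine ⟨?_, by rw [hs1, he0]⟩
        rw [hs1]
        apply Fin.pos_of_ne_zero
        intro h
        exact hMne (by rw [← h, Equiv.Perm.inv_def, Equiv.symm_apply_apply] :
          (σ⁻¹ 0 : Fin (n+1)) = Fin.last n)
      have hcard : ((pairs n).filter (fun p => p.1 = σ⁻¹ 0 ∨ p.2 = σ⁻¹ 0)).card = n := by
        rw [Finset.filter_or, Finset.card_union_of_disjoint]
        · rw [card_filter_fst, card_filter_snd]
          have := (σ⁻¹ 0 : Fin (n+1)).isLt
          omega
        · rw [Finset.disjoint_left]
          intro p hp1 hp2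
          rw [Finset.mem_filter, mem_pairs] at hp1 hp2
          have hlt := hp1.1
          rw [hp1.2, hp2.2] at hlt
          exact absurd hlt (lt_irrefl _)
      have hA1 : 1 ≤ ((pairs n).filter
          (fun p => -(f (cb n p.1 p.2 1 (-1))) ∈ posRoots n)).card :=
        Finset.card_pos.2 ⟨_, hAmem⟩
      have hB1 : n ≤ ((pairs n).filter
          (fun p => -(f (cb n p.1 p.2 1 1)) ∈ posRoots n)).card :=
        le_trans (le_of_eq hcard.symm) (Finset.card_le_card hBsup)
      rw [lenOf_eq f] at hlen
      omega
  -- Step 7: full determination of sigma-inv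
  have hUB : ∀ j k (hk1 : 1 ≤ k) (hk2 : k ≤ n), k = n - j →
      ((σ⁻¹ ⟨k, by omega⟩ : Fin (n+1)) : ℕ) ≤ k - 1 := by
    intro j
    induction j with
    | zero =>
      intro k hk1 hk2 hkj
      have hne : σ⁻¹ (⟨k, by omega⟩ : Fin (n+1)) ≠ Fin.last n := by
        intro h
        have h2 : (⟨k, by omega⟩ : Fin (n+1)) = 0 :=
          Equiv.injective σ⁻¹ (h.trans hM.symm)
        rw [Fin.ext_iff, Fin.val_mk, Fin.val_zero] at h2
        omega
      have hlt := (σ⁻¹ (⟨k, by omega⟩ : Fin (n+1))).isLt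
      rw [Ne, Fin.ext_iff, Fin.val_last] at hne
      omega
    | succ j ih =>
      intro k hk1 hk2 hkj
      have h1 := ih (k+1) (by omega) (by omega) (by omega)
      have h2 := (hASC k hk1 (by omega)).1
      rw [Fin.lt_def] at h2
      omega
  have hτ : ∀ k (hk1 : 1 ≤ k) (hk2 : k ≤ n),
      ((σ⁻¹ ⟨k, by omega⟩ : Fin (n+1)) : ℕ) = k - 1 := by
    intro k hk1 hk2
    have h1 := hLB k hk1 hk2
    have h2 := hUB (n - k) k hk1 hk2 (by omega)
    omega
  -- Step 8: conclusion
  have hτj : ∀ j : Fin (n+1), (j:ℕ) ≠ 0 →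
      σ⁻¹ j = ⟨(j:ℕ) - 1, Nat.lt_of_le_of_lt (Nat.sub_le _ _) j.isLt⟩ := by
    intro j h0
    have h2 : (j:ℕ) ≤ n := by have := j.isLt; omega
    have h3 := hτ (j:ℕ) (by omega) h2
    have heta : (⟨(j:ℕ), by omega⟩ : Fin (n+1)) = j := Fin.eta j _
    rw [heta] at h3
    exact Fin.ext h3
  have hj0 : ∀ j : Fin (n+1), (j:ℕ) = 0 → j = 0 :=
    fun j h => Fin.ext (by rw [h, Fin.val_zero])
  rcases hsgn (Fin.last n) with hel | hel
  · left
    have hall : ∀ i, ε i = 1 := by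
      intro i
      by_cases hi0 : i = 0
      · rw [hi0, heq, hel]
      · by_cases hil : i = Fin.last n
        · rw [hil, hel]
        · exact hmid i hi0 hil
    funext v j
    rw [hf, hall, one_mul]
    show v (σ⁻¹ j) = if (j:ℕ) = 0 then v (Fin.last n)
      else v ⟨(j:ℕ) - 1, Nat.lt_of_le_of_lt (Nat.sub_le _ _) j.isLt⟩
    by_cases h : (j:ℕ) = 0
    · rw [if_pos h, hj0 j h, hM]
    · rw [if_neg h, hτj j h]
  · right
    have he0 : ε 0 = -1 := by rw [heq, hel]
    funext v j
    rw [hf]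
    show ε j * v (σ⁻¹ j) = if (j:ℕ) = 0 then -(v (Fin.last n))
      else if (j:ℕ) = n then -(v ⟨n - 1, Nat.lt_succ_of_le (Nat.sub_le _ _)⟩)
      else v ⟨(j:ℕ) - 1, Nat.lt_of_le_of_lt (Nat.sub_le _ _) j.isLt⟩
    by_cases h : (j:ℕ) = 0
    · rw [if_pos h, hj0 j h, hM, he0]; ring
    · rw [if_neg h]
      by_cases h2 : (j:ℕ) = n
      · have hjl : j = Fin.last n := Fin.ext (by rw [h2, Fin.val_last])
        rw [if_pos h2, hjl, hel, hτj (Fin.last n) (by rw [Fin.val_last]; omega),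
            neg_one_mul]
        exact congrArg (fun x => -(v x)) (Fin.ext (by
          show (Fin.last n : ℕ) - 1 = n - 1
          rw [Fin.val_last]))
      · rw [if_neg h2, hmid j (fun hh => h (by rw [hh, Fin.val_zero]))
          (fun hh => h2 (by rw [hh, Fin.val_last])), hτj j h, one_mul]


end S8

/-- the elements of `W^P` of length exactly `n` are precisely
`w⁺` and `w⁻`. -/
theorem stmt8 (n : ℕ) (hn : 2 ≤ n) (hne : Even n) :
    {f | f ∈ WPset n ∧ lenOf n f = n} =
      ({wplusFun n, wminusFun n} :
        Set ((Fin (n+1) → ℚ) → (Fin (n+1) → ℚ))) := by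
  ext f
  simp only [Set.mem_setOf_eq, Set.mem_insert_iff, Set.mem_singleton_iff,
    WPset, Wgrp]
  constructor
  · rintro ⟨⟨⟨σ, ε, hsgn, hprod, hf⟩, hwp⟩, hlen⟩
    exact S8.forward hn f σ ε hsgn hprod hf hwp hlen
  · rintro (rfl | rfl)
    · exact ⟨⟨⟨S8.cyc n, fun _ => 1, fun _ => Or.inl rfl, by simp, S8.wplus_hf⟩,
        S8.wplus_wp hn⟩, S8.lenOf_wplus hn⟩
    · exact ⟨⟨⟨S8.cyc n, S8.epsm n, S8.epsm_sgn, S8.epsm_prod (by omega), S8.wminus_hf hn⟩,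
        S8.wminus_wp hn⟩, S8.lenOf_wminus hn⟩
end

section
/- Twisted action computation: with ρ and the dot action as above, (w⁻)⁻¹ · (d e₀ + μ) = (μ₁-1) e₀ + ⋯ + (μ_{n-1}-1) e_{n-2} + (-μ_n - 1) e_{n-1} - (d+n) e_n. -/
/-- `(w⁻)⁻¹`: `e_{i+1} ↦ e_i` for `0 ≤ i ≤ n-2`, `e_n ↦ -e_{n-1}`, `e₀ ↦ -e_n`,
acting on `ℤ^{n+1}`. -/
def winvMinus (n : ℕ) : (Fin (n+1) → ℤ) → (Fin (n+1) → ℤ) :=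
  fun v j => if h : (j : ℕ) = n then -(v 0)
    else if h2 : (j : ℕ) = n - 1 then -(v (Fin.last n))
    else v ⟨(j : ℕ) + 1, by have := j.isLt; omega⟩

/-- `ρ = Σ_{j=0}^{n} (n-j) e_j`. -/
def rhoZ (n : ℕ) : Fin (n+1) → ℤ := fun j => (n : ℤ) - (j : ℕ)

/-- The weight `d e₀ + Σ_{j=1}^n μ_j e_j` as a vector in `ℤ^{n+1}`. -/
def lamvec (n : ℕ) (d : ℤ) (μ : Fin n → ℤ) : Fin (n+1) → ℤ :=
  fun i => if h : (i : ℕ) = 0 then d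
    else μ ⟨(i : ℕ) - 1, by have := i.isLt; omega⟩

/-- `(w⁻)⁻¹ · (d e₀ + μ)
 = (μ₁-1) e₀ + ⋯ + (μ_{n-1}-1) e_{n-2} + (-μ_n - 1) e_{n-1} - (d+n) e_n`,
where `w · λ = w(λ + ρ) - ρ` is the twisted action. -/
theorem stmt12 (n : ℕ) (hn : 2 ≤ n) (hne : Even n) (d : ℤ) (μ : Fin n → ℤ) :
    winvMinus n (lamvec n d μ + rhoZ n) - rhoZ n =
      fun (j : Fin (n+1)) => if h : (j : ℕ) = n then -(d + n)
        else if h2 : (j : ℕ) = n - 1 then -(μ ⟨n - 1, by omega⟩) - 1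
        else μ ⟨(j : ℕ), by have := j.isLt; omega⟩ - 1 := by
  funext j
  simp only [Pi.sub_apply, Pi.add_apply, winvMinus, rhoZ, lamvec, Fin.last]
  split_ifs with h1 h2 h3 h4 h5 <;> simp_all
  · simp [Fin.val_zero] at h2
  · have hc : ((n - 1 : ℕ) : ℤ) = (n : ℤ) - 1 := by omega
    rw [hc]; ring
  · ring
end
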